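/- arXiv:1707.05033 — 3 statements merged into one kernel-verified Lean document; each statement's English description precedes it below -/
import Mathlib

section
/- Let ξ > 0. Then sup_{k ∈ ℕ} | p_DGPD(k; σ, ξ) / f_GPD(k; σ, ξ) − 1 | → 0 as σ → ∞. More precisely, for all k ∈ ℕ and σ > 0, p_DGPD(k; σ, ξ)/f_GPD(k; σ, ξ) = {1 − (1 + ξ/(σ + ξk))^{−1/ξ}}·(σ + ξk), and this quantity converges to 1 uniformly in k = 0, 1, 2, … as σ → ∞. -/
/-- GPD survival function for `ξ > 0`: `F̄_GPD(x; σ, ξ) = (1 + ξx/σ)^(-1/ξ)`. -/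
noncomputable def gpdSurv (σ ξ x : ℝ) : ℝ := (1 + ξ * x / σ) ^ (-1 / ξ)

/-- GPD density for `ξ > 0`: `f_GPD(x; σ, ξ) = σ⁻¹ (1 + ξx/σ)^(-1/ξ-1)`. -/
noncomputable def fGPD (σ ξ x : ℝ) : ℝ := σ⁻¹ * (1 + ξ * x / σ) ^ (-1 / ξ - 1)

/-- D-GPD probability mass function: `p_DGPD(k;σ,ξ) = F̄_GPD(k;σ,ξ) - F̄_GPD(k+1;σ,ξ)`. -/
noncomputable def pDGPD (σ ξ : ℝ) (k : ℕ) : ℝ :=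
  gpdSurv σ ξ k - gpdSurv σ ξ (k + 1)

/-- Bernoulli's inequality for negative exponents: `1 - a u ≤ (1+u)^(-a)` for `u ≥ 0`, `a ≥ 0`. -/
lemma bern_neg {u a : ℝ} (hu : 0 ≤ u) (ha : 0 ≤ a) : 1 - a * u ≤ (1 + u) ^ (-a) := by
  rcases le_or_gt a 1 with h1 | h1
  · have hb : (1 + u) ^ a ≤ 1 + a * u :=
      rpow_one_add_le_one_add_mul_self (by linarith) ha h1
    have hpos : (0:ℝ) < (1 + u) ^ a := Real.rpow_pos_of_pos (by linarith) a
    rw [Real.rpow_neg (by linarith)]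
    have h2 : 1 - a * u ≤ (1 + a * u)⁻¹ := by
      rw [← one_div, le_div_iff₀ (by nlinarith)]
      nlinarith [sq_nonneg (a * u), mul_nonneg ha hu]
    calc 1 - a * u ≤ (1 + a * u)⁻¹ := h2
      _ ≤ ((1 + u) ^ a)⁻¹ := by
          exact inv_anti₀ hpos hb
  · have hs : (-1:ℝ) ≤ -(u / (1 + u)) := by
      rw [neg_le_neg_iff]
      rw [div_le_one (by linarith)]
      linarith
    have hb := one_add_mul_self_le_rpow_one_add hs h1.le
    have he : (1 + -(u / (1 + u))) = (1 + u)⁻¹ := by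
      field_simp
      ring
    rw [he] at hb
    rw [Real.rpow_neg (by linarith), ← Real.inv_rpow (by linarith)]
    refine le_trans ?_ hb
    have : a * (u / (1 + u)) ≤ a * u := by
      apply mul_le_mul_of_nonneg_left _ ha
      rw [div_le_iff₀ (by linarith)]
      nlinarith
    linarith

/-- For `ξ > 0`, one has the exact identity
`p_DGPD(k;σ,ξ)/f_GPD(k;σ,ξ) = {1 - (1 + ξ/(σ+ξk))^(-1/ξ)}·(σ+ξk)`, and
`sup_{k ∈ ℕ} |p_DGPD(k;σ,ξ)/f_GPD(k;σ,ξ) - 1| → 0` as `σ → ∞`. -/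
theorem pDGPD_div_fGPD_identity_and_unif_tendsto_one (ξ : ℝ) (hξ : 0 < ξ) :
    (∀ σ > (0:ℝ), ∀ k : ℕ,
      pDGPD σ ξ k / fGPD σ ξ k
        = (1 - (1 + ξ / (σ + ξ * k)) ^ (-1 / ξ)) * (σ + ξ * k)) ∧
    (∀ ε > (0:ℝ), ∃ S : ℝ, ∀ σ ≥ S, ∀ k : ℕ,
      |pDGPD σ ξ k / fGPD σ ξ k - 1| ≤ ε) := by
  have key : ∀ σ > (0:ℝ), ∀ k : ℕ,
      pDGPD σ ξ k / fGPD σ ξ k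
        = (1 - (1 + ξ / (σ + ξ * k)) ^ (-1 / ξ)) * (σ + ξ * k) := by
    intro σ hσ k
    have hk : (0:ℝ) ≤ (k : ℝ) := Nat.cast_nonneg k
    have ht : (0:ℝ) < σ + ξ * k := by nlinarith
    have hA : (0:ℝ) < 1 + ξ * k / σ := by positivity
    have hB : (0:ℝ) < 1 + ξ * ((k:ℝ) + 1) / σ := by positivity
    have hC : (0:ℝ) < 1 + ξ / (σ + ξ * k) := by positivity
    have hf : fGPD σ ξ k ≠ 0 := by
      unfold fGPD
      positivity
    rw [div_eq_iff hf]
    unfold pDGPD gpdSurv fGPD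
    have hCA : (1 + ξ / (σ + ξ * k)) * (1 + ξ * k / σ) = 1 + ξ * ((k:ℝ) + 1) / σ := by
      field_simp
      ring
    have h1 : (1 + ξ * ((k:ℝ) + 1) / σ) ^ (-1/ξ)
        = (1 + ξ / (σ + ξ * k)) ^ (-1/ξ) * (1 + ξ * k / σ) ^ (-1/ξ) := by
      rw [← Real.mul_rpow hC.le hA.le, hCA]
    have h2 : (1 + ξ * k / σ) ^ (-1/ξ)
        = (1 + ξ * k / σ) ^ (-1/ξ - 1) * (1 + ξ * k / σ) := by
      nth_rewrite 1 [show (-1/ξ) = (-1/ξ - 1) + 1 by ring]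
      rw [Real.rpow_add hA, Real.rpow_one]
    have h3 : (σ + ξ * k) * σ⁻¹ = 1 + ξ * k / σ := by
      field_simp
    have hs : σ * σ⁻¹ = 1 := mul_inv_cancel₀ hσ.ne'
    rw [h1, h2]
    linear_combination (1 - (1 + ξ / (σ + ξ * (k:ℝ))) ^ (-1/ξ)) *
      (1 + ξ * (k:ℝ) / σ) ^ (-1/ξ - 1) * h3 +
      (-2 : ℝ) * (1 + ξ * (k:ℝ) / σ) ^ (-1/ξ - 1) *
      (1 - (1 + ξ / (σ + ξ * (k:ℝ))) ^ (-1/ξ)) * hs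
  refine ⟨key, ?_⟩
  intro ε hε
  refine ⟨max 1 ((1 + ξ) / ε), fun σ hσ k => ?_⟩
  have hσ1 : (1:ℝ) ≤ σ := le_trans (le_max_left _ _) hσ
  have hσ2 : (1 + ξ) / ε ≤ σ := le_trans (le_max_right _ _) hσ
  have hσ0 : (0:ℝ) < σ := by linarith
  rw [key σ hσ0 k]
  have hk : (0:ℝ) ≤ (k : ℝ) := Nat.cast_nonneg k
  set t : ℝ := σ + ξ * k with htdef
  have ht : (0:ℝ) < t := by nlinarith
  have htσ : σ ≤ t := by nlinarith
  set u : ℝ := ξ / t with hudef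
  have hu : 0 < u := by positivity
  have hut : u * t = ξ := div_mul_cancel₀ ξ ht.ne'
  have ha : (0:ℝ) < 1 / ξ := by positivity
  have hna : (-1/ξ : ℝ) = -(1/ξ) := by ring
  rw [hna]
  -- upper bound: g ≤ 1
  have hup : (1 - (1 + u) ^ (-(1/ξ))) * t ≤ 1 := by
    have hb := bern_neg hu.le ha.le
    have h1 : 1 - (1 + u) ^ (-(1/ξ)) ≤ (1/ξ) * u := by linarith
    calc (1 - (1 + u) ^ (-(1/ξ))) * t ≤ ((1/ξ) * u) * t := by
          apply mul_le_mul_of_nonneg_right h1 ht.le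
      _ = 1 := by rw [mul_assoc, hut]; field_simp
  -- lower bound
  have hw : (0:ℝ) < (1 + u) ^ (-(1/ξ + 1)) := Real.rpow_pos_of_pos (by linarith) _
  have hlow : 1 - (1/ξ + 1) * u ≤ (1 - (1 + u) ^ (-(1/ξ))) * t := by
    have hbern : 1 + (1/ξ + 1) * u ≤ (1 + u) ^ (1/ξ + 1) :=
      one_add_mul_self_le_rpow_one_add (by linarith) (by linarith)
    have hwinv : (1 + u) ^ (-(1/ξ + 1)) * (1 + u) ^ (1/ξ + 1) = 1 := by
      rw [← Real.rpow_add (by linarith), show (-(1/ξ+1) + (1/ξ+1) : ℝ) = 0 by ring,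
        Real.rpow_zero]
    have hsplit : (1 + u) ^ (-(1/ξ)) = (1 + u) ^ (-(1/ξ + 1)) * (1 + u) := by
      nth_rewrite 1 [show (-(1/ξ) : ℝ) = (-(1/ξ + 1)) + 1 by ring]
      rw [Real.rpow_add (by linarith), Real.rpow_one]
    -- 1 - (1+u)^(-a) ≥ (1/ξ) * u * w
    have h4 : (1/ξ) * u * (1 + u) ^ (-(1/ξ + 1)) ≤ 1 - (1 + u) ^ (-(1/ξ)) := by
      rw [hsplit]
      nlinarith [mul_le_mul_of_nonneg_left hbern hw.le]
    have h5 : (1 + u) ^ (-(1/ξ + 1)) ≤ (1 - (1 + u) ^ (-(1/ξ))) * t := by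
      calc (1 + u) ^ (-(1/ξ + 1)) = (1/ξ) * u * (1 + u) ^ (-(1/ξ + 1)) * t := by
            rw [mul_assoc, mul_comm _ t, ← mul_assoc, mul_comm (1/ξ) u, mul_assoc u,
              mul_comm (1/ξ) t]
            rw [show u * (t * (1/ξ)) = (u * t) * (1/ξ) by ring, hut]
            field_simp
        _ ≤ (1 - (1 + u) ^ (-(1/ξ))) * t := by
            apply mul_le_mul_of_nonneg_right h4 ht.le
    have h6 : 1 - (1/ξ + 1) * u ≤ (1 + u) ^ (-(1/ξ + 1)) := bern_neg hu.le (by positivity)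
    linarith
  -- (1/ξ + 1) * u ≤ ε
  have hfin : (1/ξ + 1) * u ≤ ε := by
    have h7 : (1/ξ + 1) * u * t = 1 + ξ := by
      rw [mul_assoc, hut]; field_simp
    have h8 : 1 + ξ ≤ ε * σ := by
      rw [div_le_iff₀ hε] at hσ2; linarith
    nlinarith [mul_le_mul_of_nonneg_left htσ (mul_pos (mul_pos (by positivity : (0:ℝ) < 1/ξ + 1) hu) ht).le]
  rw [abs_le]
  constructor <;> nlinarith
end

section
/- Let ξ > 0. Then sup_{k ∈ ℕ} | p_DGPD(k; σ, ξ) / p_GZD(k; σ, ξ) − 1 | → 0 as σ → ∞. In the proof, the key observation is that f_GPD(k; σ, ξ)/p_GZD(k; σ, ξ) = σ^{−1} ∑_{i=0}^{∞} (1 + ξi/σ)^{−1/ξ−1}, which does not depend on k and converges to 1 as σ → ∞. -/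
open Filter Real

/-- Generalized Zipf probability mass function
`p_GZD(k;σ,ξ) = (1 + ξk/σ)^(-1/ξ-1) / ∑_{i=0}^∞ (1 + ξi/σ)^(-1/ξ-1)`. -/
noncomputable def pGZD (σ ξ : ℝ) (k : ℕ) : ℝ :=
  (1 + ξ * k / σ) ^ (-1/ξ - 1) / ∑' i : ℕ, (1 + ξ * i / σ) ^ (-1/ξ - 1)

private lemma base_pos {ξ σ t : ℝ} (hξ : 0 < ξ) (hσ : 0 < σ) (ht : 0 ≤ t) :
    0 < 1 + ξ * t / σ := by positivity

private lemma exp_nonpos {ξ : ℝ} (hξ : 0 < ξ) : -1/ξ - 1 ≤ 0 := by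
  have h : 0 < 1/ξ := by positivity
  rw [neg_div]; linarith

private lemma aux_anti {ξ σ s t : ℝ} (hξ : 0 < ξ) (hσ : 0 < σ) (hs : 0 ≤ s) (hst : s ≤ t) :
    (1 + ξ * t / σ) ^ (-1/ξ - 1) ≤ (1 + ξ * s / σ) ^ (-1/ξ - 1) := by
  apply Real.rpow_le_rpow_of_nonpos (base_pos hξ hσ hs) _ (exp_nonpos hξ)
  gcongr

private lemma hasDerivAt_surv {ξ σ t : ℝ} (hξ : 0 < ξ) (hσ : 0 < σ) (ht : 0 ≤ t) :
    HasDerivAt (fun u : ℝ => (1 + ξ * u / σ) ^ (-1/ξ))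
      (-(σ⁻¹ * (1 + ξ * t / σ) ^ (-1/ξ - 1))) t := by
  have hb := base_pos hξ hσ ht
  have h1 : HasDerivAt (fun u : ℝ => 1 + ξ * u / σ) (ξ / σ) t := by
    simpa using (((hasDerivAt_id t).const_mul ξ).div_const σ).const_add 1
  have h2 := (Real.hasDerivAt_rpow_const (p := -1/ξ) (Or.inl hb.ne')).comp t h1
  refine h2.congr_deriv ?_
  field_simp

private lemma pDGPD_bounds {ξ σ : ℝ} (hξ : 0 < ξ) (hσ : 0 < σ) (k : ℕ) :
    σ⁻¹ * (1 + ξ * (k + 1) / σ) ^ (-1/ξ - 1) ≤ pDGPD σ ξ k ∧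
    pDGPD σ ξ k ≤ σ⁻¹ * (1 + ξ * k / σ) ^ (-1/ξ - 1) := by
  have hlt : (k : ℝ) < k + 1 := by linarith
  obtain ⟨c, hc, hceq⟩ := exists_hasDerivAt_eq_slope
      (fun u : ℝ => (1 + ξ * u / σ) ^ (-1/ξ))
      (fun u => -(σ⁻¹ * (1 + ξ * u / σ) ^ (-1/ξ - 1))) hlt
      (fun x hx => (hasDerivAt_surv hξ hσ ((Nat.cast_nonneg k).trans hx.1)).continuousAt.continuousWithinAt)
      (fun x hx => hasDerivAt_surv hξ hσ ((Nat.cast_nonneg k).trans hx.1.le))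
  have hc0 : (0:ℝ) ≤ c := (Nat.cast_nonneg k).trans hc.1.le
  have hp : pDGPD σ ξ k = σ⁻¹ * (1 + ξ * c / σ) ^ (-1/ξ - 1) := by
    have : ((k:ℝ) + 1) - k = 1 := by ring
    rw [this, div_one] at hceq
    have := hceq
    unfold pDGPD gpdSurv
    rw [neg_div] at *
    linarith [this]
  constructor
  · rw [hp]
    have := aux_anti hξ hσ hc0 hc.2.le
    have hσi : (0:ℝ) ≤ σ⁻¹ := by positivity
    exact mul_le_mul_of_nonneg_left this hσi
  · rw [hp]
    have := aux_anti hξ hσ (Nat.cast_nonneg k) hc.1.le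
    have hσi : (0:ℝ) ≤ σ⁻¹ := by positivity
    exact mul_le_mul_of_nonneg_left this hσi

private lemma pDGPD_nonneg {ξ σ : ℝ} (hξ : 0 < ξ) (hσ : 0 < σ) (k : ℕ) :
    0 ≤ pDGPD σ ξ k :=
  le_trans (by positivity) (pDGPD_bounds hξ hσ k).1

private lemma hasSum_pDGPD {ξ σ : ℝ} (hξ : 0 < ξ) (hσ : 0 < σ) :
    HasSum (pDGPD σ ξ) 1 := by
  rw [hasSum_iff_tendsto_nat_of_nonneg (pDGPD_nonneg hξ hσ)]
  have hsum : ∀ n : ℕ, ∑ k ∈ Finset.range n, pDGPD σ ξ k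
      = 1 - (1 + ξ * n / σ) ^ (-1/ξ) := by
    intro n
    have : ∀ k : ℕ, pDGPD σ ξ k = gpdSurv σ ξ k - gpdSurv σ ξ (k + 1 : ℕ) := by
      intro k; unfold pDGPD; push_cast; ring_nf
    simp_rw [this]
    rw [Finset.sum_range_sub' (fun k : ℕ => gpdSurv σ ξ k)]
    unfold gpdSurv
    rw [neg_div]
    norm_num
  simp_rw [hsum]
  have h1 : Tendsto (fun n : ℕ => 1 + ξ * n / σ) atTop atTop := by
    apply tendsto_atTop_add_const_left
    apply Tendsto.atTop_div_const hσ
    exact (tendsto_natCast_atTop_atTop).const_mul_atTop hξ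
  have h2 : Tendsto (fun x : ℝ => x ^ (-(1/ξ))) atTop (nhds 0) :=
    tendsto_rpow_neg_atTop (by positivity)
  have := (h2.comp h1).const_sub 1
  simpa [neg_div] using this

private lemma summable_a {ξ σ : ℝ} (hξ : 0 < ξ) (hσ : 0 < σ) :
    Summable (fun k : ℕ => (1 + ξ * k / σ) ^ (-1/ξ - 1)) := by
  rw [← summable_nat_add_iff 1]
  apply Summable.of_nonneg_of_le (fun k => by positivity)
      (fun k => ?_) ((hasSum_pDGPD hξ hσ).summable.mul_left σ)
  have h := (pDGPD_bounds hξ hσ k).1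
  have : (1 + ξ * ((k:ℝ) + 1) / σ) ^ (-1/ξ - 1) ≤ σ * pDGPD σ ξ k := by
    calc (1 + ξ * ((k:ℝ) + 1) / σ) ^ (-1/ξ - 1)
        = σ * (σ⁻¹ * (1 + ξ * ((k:ℝ) + 1) / σ) ^ (-1/ξ - 1)) := by
          field_simp
      _ ≤ σ * pDGPD σ ξ k := by
          exact mul_le_mul_of_nonneg_left h hσ.le
  convert this using 3
  push_cast; ring

private lemma L_bounds {ξ σ : ℝ} (hξ : 0 < ξ) (hσ : 0 < σ) :
    1 ≤ σ⁻¹ * ∑' k : ℕ, (1 + ξ * k / σ) ^ (-1/ξ - 1) ∧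
    σ⁻¹ * ∑' k : ℕ, (1 + ξ * k / σ) ^ (-1/ξ - 1) ≤ 1 + σ⁻¹ := by
  have hS := summable_a hξ hσ
  constructor
  · have h := Summable.tsum_le_tsum (fun k => (pDGPD_bounds hξ hσ k).2)
      (hasSum_pDGPD hξ hσ).summable (hS.mul_left σ⁻¹)
    rw [tsum_mul_left] at h
    have he := (hasSum_pDGPD hξ hσ).tsum_eq
    linarith
  · rw [Summable.tsum_eq_zero_add hS]
    have h0 : (1 + ξ * (0:ℕ) / σ) ^ (-1/ξ - 1) = 1 := by
      norm_num
    rw [h0]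
    have htail : ∑' k : ℕ, (1 + ξ * (k + 1 : ℕ) / σ) ^ (-1/ξ - 1) ≤ σ := by
      have := Summable.tsum_le_tsum (f := fun k : ℕ => (1 + ξ * (k + 1 : ℕ) / σ) ^ (-1/ξ - 1))
        (g := fun k => σ * pDGPD σ ξ k) (fun k => ?_)
        ((summable_nat_add_iff 1).mpr hS) ((hasSum_pDGPD hξ hσ).summable.mul_left σ)
      · calc ∑' k : ℕ, (1 + ξ * (k + 1 : ℕ) / σ) ^ (-1/ξ - 1)
            ≤ ∑' k : ℕ, σ * pDGPD σ ξ k := this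
          _ = σ * 1 := by rw [tsum_mul_left, (hasSum_pDGPD hξ hσ).tsum_eq]
          _ = σ := mul_one σ
      · have h := (pDGPD_bounds hξ hσ k).1
        calc (1 + ξ * (k + 1 : ℕ) / σ) ^ (-1/ξ - 1)
            = σ * (σ⁻¹ * (1 + ξ * ((k:ℝ) + 1) / σ) ^ (-1/ξ - 1)) := by
              push_cast; field_simp
          _ ≤ σ * pDGPD σ ξ k := mul_le_mul_of_nonneg_left h hσ.le
    have hσi : (0:ℝ) < σ⁻¹ := by positivity
    calc σ⁻¹ * (1 + ∑' k : ℕ, (1 + ξ * (k + 1 : ℕ) / σ) ^ (-1/ξ - 1))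
        ≤ σ⁻¹ * (1 + σ) := by
          apply mul_le_mul_of_nonneg_left _ hσi.le
          linarith
      _ = σ⁻¹ + 1 := by field_simp
      _ = 1 + σ⁻¹ := by ring

private lemma tendsto_L {ξ : ℝ} (hξ : 0 < ξ) :
    Tendsto (fun σ : ℝ => σ⁻¹ * ∑' i : ℕ, (1 + ξ * i / σ) ^ (-1/ξ - 1))
      Filter.atTop (nhds 1) := by
  refine tendsto_of_tendsto_of_tendsto_of_le_of_le' (g := fun _ : ℝ => (1:ℝ))
    (h := fun σ : ℝ => 1 + σ⁻¹) tendsto_const_nhds ?_ ?_ ?_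
  · have := tendsto_inv_atTop_zero (𝕜 := ℝ)
    simpa using (tendsto_const_nhds (x := (1:ℝ))).add this
  · filter_upwards [eventually_gt_atTop (0:ℝ)] with σ hσ
    exact (L_bounds hξ hσ).1
  · filter_upwards [eventually_gt_atTop (0:ℝ)] with σ hσ
    exact (L_bounds hξ hσ).2

/-- For `ξ > 0`, `sup_{k ∈ ℕ} |p_DGPD(k;σ,ξ)/p_GZD(k;σ,ξ) - 1| → 0` as
`σ → ∞`; the key observation is the `k`-free identity
`f_GPD(k;σ,ξ)/p_GZD(k;σ,ξ) = σ⁻¹ ∑_{i=0}^∞ (1 + ξi/σ)^(-1/ξ-1)`, whose right-hand side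
converges to `1` as `σ → ∞`. -/
theorem pDGPD_div_pGZD_unif_tendsto_one (ξ : ℝ) (hξ : 0 < ξ) :
    (∀ σ > (0:ℝ), ∀ k : ℕ,
      fGPD σ ξ k / pGZD σ ξ k = σ⁻¹ * ∑' i : ℕ, (1 + ξ * i / σ) ^ (-1/ξ - 1)) ∧
    Filter.Tendsto (fun σ : ℝ => σ⁻¹ * ∑' i : ℕ, (1 + ξ * i / σ) ^ (-1/ξ - 1))
      Filter.atTop (nhds 1) ∧
    (∀ ε > (0:ℝ), ∃ S : ℝ, ∀ σ ≥ S, ∀ k : ℕ,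
      |pDGPD σ ξ k / pGZD σ ξ k - 1| ≤ ε) := by
  have hTpos : ∀ σ > (0:ℝ), 0 < ∑' i : ℕ, (1 + ξ * i / σ) ^ (-1/ξ - 1) := by
    intro σ hσ
    have h1 := (L_bounds hξ hσ).1
    nlinarith [inv_pos.mpr hσ]
  refine ⟨?_, tendsto_L hξ, ?_⟩
  · intro σ hσ k
    have ha : (0:ℝ) < (1 + ξ * k / σ) ^ (-1/ξ - 1) := by positivity
    have hT := hTpos σ hσ
    unfold fGPD pGZD
    rw [neg_div] at *
    rw [div_div_eq_mul_div]
    field_simp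
  · intro ε hε
    set L : ℝ → ℝ := fun σ => σ⁻¹ * ∑' i : ℕ, (1 + ξ * i / σ) ^ (-1/ξ - 1) with hLdef
    have hLt := tendsto_L hξ
    have hRt : Tendsto (fun σ : ℝ => (1 + ξ / σ) ^ (-1/ξ - 1)) atTop (nhds 1) := by
      have h1 : Tendsto (fun σ : ℝ => 1 + ξ / σ) atTop (nhds 1) := by
        have := (tendsto_inv_atTop_zero (𝕜 := ℝ)).const_mul ξ
        simp only [mul_zero] at this
        simpa [div_eq_mul_inv] using (tendsto_const_nhds (x := (1:ℝ))).add this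
      have h2 : ContinuousAt (fun x : ℝ => x ^ (-1/ξ - 1)) 1 :=
        (Real.continuousAt_rpow_const 1 _ (Or.inl one_ne_zero))
      have := h2.tendsto.comp h1
      rwa [Real.one_rpow] at this
    have hMt : Tendsto (fun σ : ℝ => L σ * (1 + ξ / σ) ^ (-1/ξ - 1)) atTop (nhds 1) := by
      simpa using hLt.mul hRt
    have hev : ∀ᶠ σ : ℝ in atTop, (0 < σ ∧ |L σ - 1| < ε) ∧
        |L σ * (1 + ξ / σ) ^ (-1/ξ - 1) - 1| < ε := by
      filter_upwards [eventually_gt_atTop (0:ℝ),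
        hLt (Metric.ball_mem_nhds 1 hε), hMt (Metric.ball_mem_nhds 1 hε)] with σ h1 h2 h3
      exact ⟨⟨h1, by simpa [Real.dist_eq] using h2⟩, by simpa [Real.dist_eq] using h3⟩
    obtain ⟨S, hS⟩ := eventually_atTop.mp hev
    refine ⟨S, fun σ hσS k => ?_⟩
    obtain ⟨⟨hσ, hLε⟩, hMε⟩ := hS σ hσS
    have ha : (0:ℝ) < (1 + ξ * k / σ) ^ (-1/ξ - 1) := by positivity
    have hT := hTpos σ hσ
    have hb := pDGPD_bounds hξ hσ k
    -- ratio r = pDGPD * T / a k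
    have hr : pDGPD σ ξ k / pGZD σ ξ k
        = pDGPD σ ξ k * (∑' i : ℕ, (1 + ξ * i / σ) ^ (-1/ξ - 1))
          / (1 + ξ * k / σ) ^ (-1/ξ - 1) := by
      unfold pGZD
      rw [div_div_eq_mul_div]
    set T := ∑' i : ℕ, (1 + ξ * i / σ) ^ (-1/ξ - 1) with hTdef
    set a0 := (1 + ξ * k / σ) ^ (-1/ξ - 1) with ha0def
    have hupper : pDGPD σ ξ k * T / a0 ≤ L σ := by
      rw [div_le_iff₀ ha]
      have := hb.2
      simp only [hLdef]
      nlinarith [hT.le, ha.le, mul_le_mul_of_nonneg_right this hT.le]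
    have hkey : (1 + ξ / σ) ^ (-1/ξ - 1) * a0 ≤ (1 + ξ * ((k:ℝ) + 1) / σ) ^ (-1/ξ - 1) := by
      have hx : (0:ℝ) < 1 + ξ * ((k:ℝ) + 1) / σ := by positivity
      have hxy : 1 + ξ * ((k:ℝ) + 1) / σ ≤ (1 + ξ / σ) * (1 + ξ * k / σ) := by
        have h1 : (0:ℝ) ≤ (ξ / σ) * (ξ * k / σ) := by positivity
        have h2 : (1 + ξ / σ) * (1 + ξ * (k:ℝ) / σ)
            = 1 + ξ * ((k:ℝ) + 1) / σ + (ξ / σ) * (ξ * (k:ℝ) / σ) := by ring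
        linarith
      have h2 := Real.rpow_le_rpow_of_nonpos hx hxy (exp_nonpos hξ)
      rwa [Real.mul_rpow (by positivity) (by positivity)] at h2
    have hlower : L σ * (1 + ξ / σ) ^ (-1/ξ - 1) ≤ pDGPD σ ξ k * T / a0 := by
      rw [le_div_iff₀ ha]
      have h1 := hb.1
      have hσi : (0:ℝ) ≤ σ⁻¹ := by positivity
      have h3 : σ⁻¹ * ((1 + ξ / σ) ^ (-1/ξ - 1) * a0)
          ≤ σ⁻¹ * (1 + ξ * ((k:ℝ) + 1) / σ) ^ (-1/ξ - 1) :=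
        mul_le_mul_of_nonneg_left hkey hσi
      have h4 : σ⁻¹ * ((1 + ξ / σ) ^ (-1/ξ - 1) * a0) ≤ pDGPD σ ξ k := le_trans h3 h1
      simp only [hLdef]
      nlinarith [hT.le, mul_le_mul_of_nonneg_right h4 hT.le]
    rw [hr]
    rw [abs_le]
    constructor
    · have := neg_abs_le (L σ * (1 + ξ / σ) ^ (-1/ξ - 1) - 1)
      linarith [hlower, hMε, this]
    · have := le_abs_self (L σ - 1)
      linarith [hupper, hLε, this]
end

section
/- Let ξ > 0, δ ∈ [0,1), and fix k ∈ ℕ. Then, as σ → ∞, p_DGPD(k; σ, ξ) / f_GPD(k + δ; σ, ξ) = 1 + (1 + ξ)(2δ − 1)/(2σ) + O(σ^{−2}). In particular, among continuity corrections δ ∈ [0,1), the first-order term vanishes exactly when δ = 1/2. -/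
open Set

lemma hasDerivAt_base (d r s u : ℝ) (h : (0:ℝ) < 1 + d * u) (hs : s = r - 1) :
    HasDerivAt (fun t : ℝ => (1 + d * t) ^ r) (d * r * (1 + d * u) ^ s) u := by
  subst hs
  have h0 : HasDerivAt (fun t : ℝ => 1 + d * t) d u := by
    simpa using ((hasDerivAt_id u).const_mul d).const_add 1
  simpa using h0.rpow_const (p := r) (Or.inl h.ne')

noncomputable def H0 (a b c E p : ℝ) (u : ℝ) : ℝ :=
  (1 + a * u) ^ p - (1 + b * u) ^ p - (u + E * u ^ 2) * (1 + c * u) ^ (p - 1)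

noncomputable def H1 (a b c E p : ℝ) (u : ℝ) : ℝ :=
  a * p * (1 + a * u) ^ (p - 1) - b * p * (1 + b * u) ^ (p - 1) -
    ((1 + 2 * E * u) * (1 + c * u) ^ (p - 1) +
      (u + E * u ^ 2) * (c * (p - 1) * (1 + c * u) ^ (p - 2)))

noncomputable def H2 (a b c E p : ℝ) (u : ℝ) : ℝ :=
  a * p * (a * (p - 1) * (1 + a * u) ^ (p - 2)) -
    b * p * (b * (p - 1) * (1 + b * u) ^ (p - 2)) -
    ((2 * E * (1 + c * u) ^ (p - 1) + (1 + 2 * E * u) * (c * (p - 1) * (1 + c * u) ^ (p - 2))) +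
      ((1 + 2 * E * u) * (c * (p - 1) * (1 + c * u) ^ (p - 2)) +
        (u + E * u ^ 2) * (c * (p - 1) * (c * (p - 2) * (1 + c * u) ^ (p - 3)))))

noncomputable def H3 (a b c E p : ℝ) (u : ℝ) : ℝ :=
  a * p * (a * (p - 1) * (a * (p - 2) * (1 + a * u) ^ (p - 3))) -
    b * p * (b * (p - 1) * (b * (p - 2) * (1 + b * u) ^ (p - 3))) -
    (((2 * E * (c * (p - 1) * (1 + c * u) ^ (p - 2))) +
        (2 * E * (c * (p - 1) * (1 + c * u) ^ (p - 2)) +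
          (1 + 2 * E * u) * (c * (p - 1) * (c * (p - 2) * (1 + c * u) ^ (p - 3))))) +
      ((2 * E * (c * (p - 1) * (1 + c * u) ^ (p - 2)) +
          (1 + 2 * E * u) * (c * (p - 1) * (c * (p - 2) * (1 + c * u) ^ (p - 3)))) +
        ((1 + 2 * E * u) * (c * (p - 1) * (c * (p - 2) * (1 + c * u) ^ (p - 3))) +
          (u + E * u ^ 2) * (c * (p - 1) * (c * (p - 2) * (c * (p - 3) * (1 + c * u) ^ (p - 4)))))))

lemma Dpoly (E u : ℝ) : HasDerivAt (fun t : ℝ => t + E * t ^ 2) (1 + 2 * E * u) u := by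
  have h2 : HasDerivAt (fun t : ℝ => E * t ^ 2) (2 * E * u) u := by
    have := (hasDerivAt_pow 2 u).const_mul E
    refine this.congr_deriv ?_
    push_cast
    ring
  simpa [Pi.add_def] using (hasDerivAt_id u).add h2

lemma Dlin (E u : ℝ) : HasDerivAt (fun t : ℝ => 1 + 2 * E * t) (2 * E) u := by
  have h : HasDerivAt (fun t : ℝ => 2 * E * t) (2 * E) u := by
    simpa using (hasDerivAt_id u).const_mul (2 * E)
  exact h.const_add 1

lemma H0_deriv (a b c E p u : ℝ) (hau : (0:ℝ) < 1 + a * u) (hbu : (0:ℝ) < 1 + b * u)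
    (hcu : (0:ℝ) < 1 + c * u) :
    HasDerivAt (H0 a b c E p) (H1 a b c E p u) u := by
  have Da := hasDerivAt_base a p (p - 1) u hau rfl
  have Db := hasDerivAt_base b p (p - 1) u hbu rfl
  have Dc := hasDerivAt_base c (p - 1) (p - 2) u hcu (by ring)
  have D := (Da.sub Db).sub ((Dpoly E u).mul Dc)
  unfold H0
  simpa [H0, H1, Pi.add_def, Pi.sub_def, Pi.mul_def] using D

lemma H1_deriv (a b c E p u : ℝ) (hau : (0:ℝ) < 1 + a * u) (hbu : (0:ℝ) < 1 + b * u)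
    (hcu : (0:ℝ) < 1 + c * u) :
    HasDerivAt (H1 a b c E p) (H2 a b c E p u) u := by
  have Da := (hasDerivAt_base a (p - 1) (p - 2) u hau (by ring)).const_mul (a * p)
  have Db := (hasDerivAt_base b (p - 1) (p - 2) u hbu (by ring)).const_mul (b * p)
  have D3a := (Dlin E u).mul (hasDerivAt_base c (p - 1) (p - 2) u hcu (by ring))
  have D3b := (Dpoly E u).mul
    ((hasDerivAt_base c (p - 2) (p - 3) u hcu (by ring)).const_mul (c * (p - 1)))
  have D := (Da.sub Db).sub (D3a.add D3b)
  unfold H1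
  simpa [H1, H2, Pi.add_def, Pi.sub_def, Pi.mul_def] using D

lemma H2_deriv (a b c E p u : ℝ) (hau : (0:ℝ) < 1 + a * u) (hbu : (0:ℝ) < 1 + b * u)
    (hcu : (0:ℝ) < 1 + c * u) :
    HasDerivAt (H2 a b c E p) (H3 a b c E p u) u := by
  have Da := ((hasDerivAt_base a (p - 2) (p - 3) u hau (by ring)).const_mul (a * (p - 1))).const_mul (a * p)
  have Db := ((hasDerivAt_base b (p - 2) (p - 3) u hbu (by ring)).const_mul (b * (p - 1))).const_mul (b * p)
  have Dc1 := (hasDerivAt_base c (p - 1) (p - 2) u hcu (by ring)).const_mul (2 * E)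
  have Dc2 := (Dlin E u).mul
    ((hasDerivAt_base c (p - 2) (p - 3) u hcu (by ring)).const_mul (c * (p - 1)))
  have Dc3 := (Dlin E u).mul
    ((hasDerivAt_base c (p - 2) (p - 3) u hcu (by ring)).const_mul (c * (p - 1)))
  have Dc4 := (Dpoly E u).mul
    (((hasDerivAt_base c (p - 3) (p - 4) u hcu (by ring)).const_mul (c * (p - 2))).const_mul (c * (p - 1)))
  have D := (Da.sub Db).sub ((Dc1.add Dc2).add (Dc3.add Dc4))
  unfold H2
  simpa [H2, H3, Pi.add_def, Pi.sub_def, Pi.mul_def] using D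

lemma pos_base {d t : ℝ} (hd : 0 ≤ d) (ht : 0 ≤ t) : (0:ℝ) < 1 + d * t := by
  nlinarith [mul_nonneg hd ht]

lemma contOn_base (d r : ℝ) (hd : 0 ≤ d) :
    ContinuousOn (fun u : ℝ => (1 + d * u) ^ r) (Icc (0:ℝ) 1) := by
  intro x hx
  have hpos := pos_base hd hx.1
  exact (((continuous_const.add (continuous_const.mul continuous_id)).continuousAt).rpow_const
    (Or.inl hpos.ne')).continuousWithinAt

lemma H3_cont (a b c E p : ℝ) (ha : 0 ≤ a) (hb : 0 ≤ b) (hc : 0 ≤ c) :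
    ContinuousOn (H3 a b c E p) (Icc (0:ℝ) 1) := by
  have cpoly : ContinuousOn (fun u : ℝ => u + E * u ^ 2) (Icc (0:ℝ) 1) :=
    (continuous_id.add (continuous_const.mul (continuous_pow 2))).continuousOn
  have clin : ContinuousOn (fun u : ℝ => 1 + 2 * E * u) (Icc (0:ℝ) 1) :=
    (continuous_const.add (continuous_const.mul continuous_id)).continuousOn
  unfold H3
  refine ContinuousOn.sub (ContinuousOn.sub ?_ ?_) ?_
  · exact continuousOn_const.mul (continuousOn_const.mul (continuousOn_const.mul
      (contOn_base a (p - 3) ha)))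
  · exact continuousOn_const.mul (continuousOn_const.mul (continuousOn_const.mul
      (contOn_base b (p - 3) hb)))
  · refine ContinuousOn.add (ContinuousOn.add ?_ ?_) (ContinuousOn.add ?_ ?_)
    · exact continuousOn_const.mul (continuousOn_const.mul (contOn_base c (p - 2) hc))
    · exact ((continuousOn_const.mul (continuousOn_const.mul (contOn_base c (p - 2) hc)))).add
        (clin.mul (continuousOn_const.mul (continuousOn_const.mul (contOn_base c (p - 3) hc))))
    · exact ((continuousOn_const.mul (continuousOn_const.mul (contOn_base c (p - 2) hc)))).add
        (clin.mul (continuousOn_const.mul (continuousOn_const.mul (contOn_base c (p - 3) hc))))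
    · exact (clin.mul (continuousOn_const.mul (continuousOn_const.mul (contOn_base c (p - 3) hc)))).add
        (cpoly.mul (continuousOn_const.mul (continuousOn_const.mul (continuousOn_const.mul
          (contOn_base c (p - 4) hc)))))

lemma H0_bound (a b c E p M : ℝ) (ha : 0 ≤ a) (hb : 0 ≤ b) (hc : 0 ≤ c)
    (h1z : H1 a b c E p 0 = 0) (h2z : H2 a b c E p 0 = 0)
    (hM : ∀ x ∈ Icc (0:ℝ) 1, |H3 a b c E p x| ≤ M)
    (u : ℝ) (hu : 0 < u) (hu1 : u ≤ 1) :
    |H0 a b c E p u| ≤ M * u ^ 3 := by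
  have h00 : H0 a b c E p 0 = 0 := by simp [H0]
  have D0 : ∀ t ∈ Icc (0:ℝ) u, HasDerivAt (H0 a b c E p) (H1 a b c E p t) t := fun t ht =>
    H0_deriv a b c E p t (pos_base ha ht.1) (pos_base hb ht.1) (pos_base hc ht.1)
  obtain ⟨c1, hc1, e1⟩ := exists_hasDerivAt_eq_slope (H0 a b c E p) (H1 a b c E p) hu
    (fun t ht => (D0 t ht).continuousAt.continuousWithinAt)
    (fun t ht => D0 t (Ioo_subset_Icc_self ht))
  have D1 : ∀ t ∈ Icc (0:ℝ) c1, HasDerivAt (H1 a b c E p) (H2 a b c E p t) t := fun t ht =>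
    H1_deriv a b c E p t (pos_base ha ht.1) (pos_base hb ht.1) (pos_base hc ht.1)
  obtain ⟨c2, hc2, e2⟩ := exists_hasDerivAt_eq_slope (H1 a b c E p) (H2 a b c E p) hc1.1
    (fun t ht => (D1 t ht).continuousAt.continuousWithinAt)
    (fun t ht => D1 t (Ioo_subset_Icc_self ht))
  have D2 : ∀ t ∈ Icc (0:ℝ) c2, HasDerivAt (H2 a b c E p) (H3 a b c E p t) t := fun t ht =>
    H2_deriv a b c E p t (pos_base ha ht.1) (pos_base hb ht.1) (pos_base hc ht.1)
  obtain ⟨c3, hc3, e3⟩ := exists_hasDerivAt_eq_slope (H2 a b c E p) (H3 a b c E p) hc2.1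
    (fun t ht => (D2 t ht).continuousAt.continuousWithinAt)
    (fun t ht => D2 t (Ioo_subset_Icc_self ht))
  rw [h00] at e1; rw [h1z] at e2; rw [h2z] at e3
  have hc1u : c1 < u := hc1.2
  have hc2u : c2 < c1 := hc2.2
  have hc3u : c3 < c2 := hc3.2
  have hc10 : 0 < c1 := hc1.1
  have hc20 : 0 < c2 := hc2.1
  have hc30 : 0 < c3 := hc3.1
  have eH0 : H0 a b c E p u = H3 a b c E p c3 * c2 * c1 * u := by
    have e1' : H0 a b c E p u = H1 a b c E p c1 * u := by
      field_simp [(show u ≠ 0 by linarith)] at e1; linarith [e1]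
    have e2' : H1 a b c E p c1 = H2 a b c E p c2 * c1 := by
      field_simp [(show c1 ≠ 0 by linarith)] at e2; linarith [e2]
    have e3' : H2 a b c E p c2 = H3 a b c E p c3 * c2 := by
      field_simp [(show c2 ≠ 0 by linarith)] at e3; linarith [e3]
    rw [e1', e2', e3']
  have hA : |H3 a b c E p c3| ≤ M := hM c3 ⟨hc30.le, by linarith⟩
  have hA0 : 0 ≤ |H3 a b c E p c3| := abs_nonneg _
  rw [eH0]
  have : |H3 a b c E p c3 * c2 * c1 * u| = |H3 a b c E p c3| * c2 * c1 * u := by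
    rw [abs_mul, abs_mul, abs_mul, abs_of_pos hc20, abs_of_pos hc10, abs_of_pos hu]
  rw [this]
  have hM0 : 0 ≤ M := le_trans hA0 hA
  have s2 : c2 * c1 ≤ u * u := mul_le_mul (by linarith) (by linarith) hc10.le hu.le
  calc |H3 a b c E p c3| * c2 * c1 * u = |H3 a b c E p c3| * (c2 * c1 * u) := by ring
    _ ≤ M * (c2 * c1 * u) := mul_le_mul_of_nonneg_right hA (by positivity)
    _ ≤ M * (u * u * u) :=
        mul_le_mul_of_nonneg_left (mul_le_mul_of_nonneg_right s2 hu.le) hM0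
    _ = M * u ^ 3 := by ring

/-- For `ξ > 0`, `δ ∈ [0,1)` and fixed `k ∈ ℕ`, as `σ → ∞`,
`p_DGPD(k;σ,ξ)/f_GPD(k+δ;σ,ξ) = 1 + (1+ξ)(2δ-1)/(2σ) + O(σ⁻²)`; and among continuity
corrections `δ ∈ [0,1)`, the first-order term vanishes exactly when `δ = 1/2`. -/
theorem pDGPD_continuity_correction_expansion
    (ξ : ℝ) (hξ : 0 < ξ) (δ : ℝ) (hδ : δ ∈ Set.Ico (0:ℝ) 1) (k : ℕ) :
    (∃ C > (0:ℝ), ∃ σ₀ : ℝ, ∀ σ ≥ σ₀,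
      |pDGPD σ ξ k / fGPD σ ξ ((k : ℝ) + δ)
          - (1 + (1 + ξ) * (2 * δ - 1) / (2 * σ))| ≤ C / σ ^ 2) ∧
    ((1 + ξ) * (2 * δ - 1) = 0 ↔ δ = 1 / 2) := by
  obtain ⟨hδ0, hδ1⟩ := hδ
  have hξ0 : ξ ≠ 0 := ne_of_gt hξ
  constructor
  · set a : ℝ := ξ * (k : ℝ) with ha_def
    set b : ℝ := ξ * ((k : ℝ) + 1) with hb_def
    set c : ℝ := ξ * ((k : ℝ) + δ) with hc_def
    set E : ℝ := (1 + ξ) * (2 * δ - 1) / 2 with hE_def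
    set p : ℝ := -1 / ξ with hp_def
    have ha : 0 ≤ a := by rw [ha_def]; positivity
    have hb : 0 ≤ b := by rw [hb_def]; positivity
    have hc : 0 ≤ c := by
      rw [hc_def]
      exact mul_nonneg hξ.le (add_nonneg (Nat.cast_nonneg k) hδ0)
    have hp1 : p - 1 ≤ 0 := by
      have : -1 / ξ < 0 := div_neg_of_neg_of_pos (by norm_num) hξ
      rw [hp_def]; linarith
    have h1z : H1 a b c E p 0 = 0 := by
      simp [H1]
      rw [ha_def, hb_def, hp_def]
      field_simp
      ring
    have h2z : H2 a b c E p 0 = 0 := by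
      simp [H2]
      rw [ha_def, hb_def, hc_def, hE_def, hp_def]
      field_simp
      ring
    obtain ⟨M, hMn⟩ := isCompact_Icc.exists_bound_of_continuousOn (H3_cont a b c E p ha hb hc)
    have hM : ∀ x ∈ Icc (0:ℝ) 1, |H3 a b c E p x| ≤ M := fun x hx => by
      simpa [Real.norm_eq_abs] using hMn x hx
    have hM0 : 0 ≤ M := le_trans (abs_nonneg _) (hM 0 ⟨le_refl _, zero_le_one⟩)
    have hc1pos : (0:ℝ) < 1 + c := by linarith
    have hm : (0:ℝ) < (1 + c) ^ (p - 1) := Real.rpow_pos_of_pos hc1pos _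
    refine ⟨(M + 1) / ((1 + c) ^ (p - 1)), by positivity, 1, ?_⟩
    intro σ hσ
    have hσ0 : (0:ℝ) < σ := lt_of_lt_of_le one_pos hσ
    have hu : (0:ℝ) < σ⁻¹ := inv_pos.mpr hσ0
    have hu1 : σ⁻¹ ≤ 1 := by
      rw [show (1:ℝ) = (1:ℝ)⁻¹ by norm_num]
      exact inv_anti₀ one_pos hσ
    have hbase : (0:ℝ) < 1 + c * σ⁻¹ := pos_base hc hu.le
    have hR3 : (0:ℝ) < (1 + c * σ⁻¹) ^ (p - 1) := Real.rpow_pos_of_pos hbase _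
    have hD : (0:ℝ) < σ⁻¹ * (1 + c * σ⁻¹) ^ (p - 1) := mul_pos hu hR3
    have hmono : (1 + c) ^ (p - 1) ≤ (1 + c * σ⁻¹) ^ (p - 1) := by
      apply Real.rpow_le_rpow_of_nonpos hbase _ hp1
      nlinarith [mul_le_of_le_one_right hc hu1]
    have hbound := H0_bound a b c E p M ha hb hc h1z h2z hM σ⁻¹ hu hu1
    have hEq : pDGPD σ ξ k / fGPD σ ξ ((k : ℝ) + δ) - (1 + (1 + ξ) * (2 * δ - 1) / (2 * σ))
        = H0 a b c E p σ⁻¹ / (σ⁻¹ * (1 + c * σ⁻¹) ^ (p - 1)) := by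
      rw [ha_def, hb_def, hc_def, hE_def, hp_def] at *
      simp only [pDGPD, gpdSurv, fGPD, H0]
      simp only [div_eq_mul_inv] at *
      field_simp
    rw [hEq]
    calc |H0 a b c E p σ⁻¹ / (σ⁻¹ * (1 + c * σ⁻¹) ^ (p - 1))|
        = |H0 a b c E p σ⁻¹| / (σ⁻¹ * (1 + c * σ⁻¹) ^ (p - 1)) := by
          rw [abs_div, abs_of_pos hD]
      _ ≤ (M * (σ⁻¹) ^ 3) / (σ⁻¹ * (1 + c) ^ (p - 1)) :=
          div_le_div₀ (by positivity) hbound (by positivity) (by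
            exact mul_le_mul_of_nonneg_left hmono hu.le)
      _ ≤ ((M + 1) * (σ⁻¹) ^ 3) / (σ⁻¹ * (1 + c) ^ (p - 1)) := by
          gcongr
          linarith
      _ = (M + 1) / ((1 + c) ^ (p - 1)) / σ ^ 2 := by
          field_simp
  · constructor
    · intro h
      rcases mul_eq_zero.mp h with h' | h'
      · linarith
      · linarith
    · intro h; rw [h]; ring
end
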